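/- Let p be a prime, let R be a commutative ring of characteristic p, and let ∂ = (∂_n)_{n ∈ ℕ} be an HS-derivation on R whose components commute pairwise (∂_i ∘ ∂_j = ∂_j ∘ ∂_i for all i, j). Then the sequence (∂_n^{(p)})_{n ∈ ℕ} is again an HS-derivation on R; in particular, ∂_0^{(p)} is the identity and ∂_n^{(p)}(xy) = Σ_{i+j=n} ∂_i^{(p)}(x)·∂_j^{(p)}(y) for all n ∈ ℕ and x, y ∈ R. -/

import Mathlib

open Finset Function

/-- `D` is a Hasse-Schmidt derivation on `R`. -/
def IsHSDeriv {R : Type*} [CommRing R] (D : ℕ → R → R) : Prop :=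
  (∀ n x y, D n (x + y) = D n x + D n y) ∧
  (∀ x, D 0 x = x) ∧
  (∀ n x y, D n (x * y) = ∑ ij ∈ Finset.HasAntidiagonal.antidiagonal n, D ij.1 x * D ij.2 y)

/-- For an HS-derivation `D` with pairwise commuting components on a ring of
characteristic `p`, the sequence of `p`-fold compositions `((D n)^{(p)})_n` is again an
HS-derivation. -/
theorem p_fold_is_HSDeriv (p : ℕ) (hp : p.Prime)
    (R : Type*) [CommRing R] [CharP R p]
    (D : ℕ → R → R)
    (hD : IsHSDeriv D)
    (hcomm : ∀ i j : ℕ, D i ∘ D j = D j ∘ D i) :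
    IsHSDeriv (fun n => (D n)^[p]) := by
  classical
  obtain ⟨hadd, hzero, hmul⟩ := hD
  haveI : Fact p.Prime := ⟨hp⟩
  haveI : NeZero p := ⟨hp.ne_zero⟩
  refine ⟨fun n x y => ?_, fun x => ?_, fun n x y => ?_⟩
  · -- additivity
    have h : ∀ (k : ℕ) (x y : R), (D n)^[k] (x + y) = (D n)^[k] x + (D n)^[k] y := by
      intro k
      induction k with
      | zero => intro x y; simp
      | succ k ih => intro x y; simp only [iterate_succ_apply, hadd, ih]
    exact h p x y
  · -- identity
    have h0 : D 0 = id := funext hzero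
    show (D 0)^[p] x = x
    rw [h0, Function.iterate_id, id_eq]
  · -- multiplicativity
    show (D n)^[p] (x * y) = ∑ ij ∈ Finset.HasAntidiagonal.antidiagonal n, (D ij.1)^[p] x * (D ij.2)^[p] y
    set s : Set (Function.End R) := Set.range (fun i => (D i : Function.End R)) with hs
    letI C : CommMonoid (Submonoid.closure s) :=
      Submonoid.closureCommMonoidOfComm (Function.End R) fun a ha b hb => by
        obtain ⟨i, rfl⟩ := ha; obtain ⟨j, rfl⟩ := hb; exact hcomm i j
    let u : ℕ → (Submonoid.closure s) := fun i => ⟨D i, Submonoid.subset_closure ⟨i, rfl⟩⟩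
    have hpow : ∀ (i k : ℕ) (z : R),
        (((u i)^k : Submonoid.closure s) : Function.End R) z = (D i)^[k] z := by
      intro i k z
      rw [SubmonoidClass.coe_pow]
      rfl
    have hDsum : ∀ (m : ℕ) {γ : Type} (t : Finset γ) (F : γ → R),
        D m (∑ i ∈ t, F i) = ∑ i ∈ t, D m (F i) := fun m _ t F =>
      map_sum (AddMonoidHom.mk' (D m) (hadd m)) F t
    -- the key induction: expansion of the k-fold iterate of the Leibniz rule
    have iter : ∀ (k : ℕ) (x y : R), (D n)^[k] (x * y) =
        ∑ f ∈ Fintype.piFinset (fun _ : Fin k => Finset.HasAntidiagonal.antidiagonal n),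
          ((∏ l, u ((f l).1) : Submonoid.closure s) : Function.End R) x *
          ((∏ l, u ((f l).2) : Submonoid.closure s) : Function.End R) y := by
      intro k
      induction k with
      | zero =>
        intro x y
        rw [Fintype.piFinset_of_isEmpty]
        simp
        rfl
      | succ k ih =>
        intro x y
        rw [iterate_succ_apply', ih, hDsum]
        have step : ∀ f ∈ Fintype.piFinset (fun _ : Fin k => Finset.HasAntidiagonal.antidiagonal n),
            D n (((∏ l, u ((f l).1) : Submonoid.closure s) : Function.End R) x *
              ((∏ l, u ((f l).2) : Submonoid.closure s) : Function.End R) y) =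
            ∑ ij ∈ Finset.HasAntidiagonal.antidiagonal n,
              ((∏ l, u (((Fin.cons ij f : Fin (k+1) → ℕ × ℕ) l).1) : Submonoid.closure s) :
                  Function.End R) x *
              ((∏ l, u (((Fin.cons ij f : Fin (k+1) → ℕ × ℕ) l).2) : Submonoid.closure s) :
                  Function.End R) y := by
          intro f _
          rw [hmul]
          refine Finset.sum_congr rfl fun ij _ => ?_
          have h1 : (∏ l, u (((Fin.cons ij f : Fin (k+1) → ℕ × ℕ) l).1)
              : Submonoid.closure s) = u ij.1 * ∏ l, u ((f l).1) := by
            rw [Fin.prod_univ_succ]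
            simp
          have h2 : (∏ l, u (((Fin.cons ij f : Fin (k+1) → ℕ × ℕ) l).2)
              : Submonoid.closure s) = u ij.2 * ∏ l, u ((f l).2) := by
            rw [Fin.prod_univ_succ]
            simp
          rw [h1, h2]
          rfl
        rw [Finset.sum_congr rfl step, ← Finset.sum_product']
        refine Finset.sum_bij' (fun a _ => (Fin.cons a.2 a.1 : Fin (k+1) → ℕ × ℕ))
          (fun g _ => ((fun l => g l.succ), g 0)) ?_ ?_ ?_ ?_ ?_
        · rintro ⟨f, ij⟩ ha
          rw [Finset.mem_product] at ha
          obtain ⟨ha1, ha2⟩ := ha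
          rw [Fintype.mem_piFinset] at ha1 ⊢
          intro l
          refine Fin.cases ?_ ?_ l
          · exact ha2
          · exact fun l' => ha1 l'
        · intro g hg
          rw [Fintype.mem_piFinset] at hg
          rw [Finset.mem_product]
          exact ⟨Fintype.mem_piFinset.2 fun l => hg l.succ, hg 0⟩
        · rintro ⟨f, ij⟩ _
          simp
        · intro g _
          exact funext fun l => Fin.cases rfl (fun l' => rfl) l
        · rintro ⟨f, ij⟩ _
          rfl
    rw [iter p x y]
    -- now reindex by `ZMod p`
    let e : Fin p ≃ ZMod p :=
      { toFun := fun i => (i : ℕ)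
        invFun := fun a => ⟨a.val, a.val_lt⟩
        left_inv := fun i => by
          ext
          exact ZMod.val_natCast_of_lt i.isLt
        right_inv := fun a => ZMod.natCast_rightInverse a }
    have reindex : ∑ f ∈ Fintype.piFinset (fun _ : Fin p => Finset.HasAntidiagonal.antidiagonal n),
          ((∏ l, u ((f l).1) : Submonoid.closure s) : Function.End R) x *
          ((∏ l, u ((f l).2) : Submonoid.closure s) : Function.End R) y
        = ∑ g ∈ Fintype.piFinset (fun _ : ZMod p => Finset.HasAntidiagonal.antidiagonal n),
          ((∏ l, u ((g l).1) : Submonoid.closure s) : Function.End R) x *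
          ((∏ l, u ((g l).2) : Submonoid.closure s) : Function.End R) y := by
      refine Finset.sum_bij' (fun f _ => f ∘ e.symm) (fun g _ => g ∘ e) ?_ ?_ ?_ ?_ ?_
      · intro f hf
        rw [Fintype.mem_piFinset] at hf ⊢
        exact fun l => hf _
      · intro g hg
        rw [Fintype.mem_piFinset] at hg ⊢
        exact fun l => hg _
      · intro f _; funext l; simp [Function.comp]
      · intro g _; funext l; simp [Function.comp]
      · intro f _
        have h1 : (∏ l, u (((f ∘ e.symm) l).1) : Submonoid.closure s)
            = ∏ l, u ((f l).1) := Equiv.prod_comp e.symm (fun l => u ((f l).1))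
        have h2 : (∏ l, u (((f ∘ e.symm) l).2) : Submonoid.closure s)
            = ∏ l, u ((f l).2) := Equiv.prod_comp e.symm (fun l => u ((f l).2))
        rw [h1, h2]
    rw [reindex]
    -- abbreviations
    set T : (ZMod p → ℕ × ℕ) → R := fun g =>
      ((∏ l, u ((g l).1) : Submonoid.closure s) : Function.End R) x *
      ((∏ l, u ((g l).2) : Submonoid.closure s) : Function.End R) y with hT
    set P : Finset (ZMod p → ℕ × ℕ) :=
      Fintype.piFinset (fun _ : ZMod p => Finset.HasAntidiagonal.antidiagonal n) with hP
    -- rotation invariance of `T`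
    have hTrot : ∀ (g : ZMod p → ℕ × ℕ) (k : ZMod p), T (fun i => g (i + k)) = T g := by
      intro g k
      have h1 : (∏ l, u ((g (l + k)).1) : Submonoid.closure s) = ∏ l, u ((g l).1) :=
        Equiv.prod_comp (Equiv.addRight k) (fun l => u ((g l).1))
      have h2 : (∏ l, u ((g (l + k)).2) : Submonoid.closure s) = ∏ l, u ((g l).2) :=
        Equiv.prod_comp (Equiv.addRight k) (fun l => u ((g l).2))
      simp only [hT, h1, h2]
    -- if a rotation by a nonzero element fixes `g`, then `g` is constant
    have hconst : ∀ (g : ZMod p → ℕ × ℕ) (d : ZMod p), d ≠ 0 →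
        (∀ i, g (i + d) = g i) → ∀ j, g j = g 0 := by
      intro g d hd hfix j
      have hm : ∀ (m : ℕ) (i : ZMod p), g (i + m • d) = g i := by
        intro m
        induction m with
        | zero => intro i; simp
        | succ m ih =>
          intro i
          have harg : i + (m + 1) • d = (i + d) + m • d := by
            rw [succ_nsmul]; ring
          rw [harg, ih, hfix]
      have hj : ∃ m : ℕ, (m : ZMod p) * d = j := by
        refine ⟨(j * d⁻¹).val, ?_⟩
        rw [ZMod.natCast_rightInverse (j * d⁻¹), mul_assoc, inv_mul_cancel₀ hd, mul_one]
      obtain ⟨m, hm'⟩ := hj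
      have hg := hm m 0
      rw [nsmul_eq_mul, hm', zero_add] at hg
      exact hg
    -- split into constant and nonconstant tuples
    rw [← Finset.sum_filter_add_sum_filter_not P (fun g => ∀ i, g i = g 0) T]
    have hnonconst : ∑ g ∈ P.filter (fun g => ¬ ∀ i, g i = g 0), T g = 0 := by
      -- setoid: orbits under rotation
      let rot : ZMod p → (ZMod p → ℕ × ℕ) → (ZMod p → ℕ × ℕ) := fun k g i => g (i + k)
      have rotrot : ∀ (a b : ZMod p) (g), rot a (rot b g) = rot (b + a) g := by
        intro a b g; funext i; show g (i + a + b) = g (i + (b + a)); rw [add_assoc, add_comm a b]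
      have rotzero : ∀ g, rot 0 g = g := by intro g; funext i; show g (i + 0) = g i; rw [add_zero]
      let Rel : Setoid (ZMod p → ℕ × ℕ) :=
        { r := fun g h => ∃ k, rot k g = h
          iseqv := by
            constructor
            · exact fun g => ⟨0, rotzero g⟩
            · rintro g h ⟨k, rfl⟩
              exact ⟨-k, by rw [rotrot, add_neg_cancel, rotzero]⟩
            · rintro g h e' ⟨k, rfl⟩ ⟨k', rfl⟩
              exact ⟨k + k', (rotrot k' k g).symm⟩ }
      refine Finset.sum_cancels_of_partition_cancels Rel ?_
      intro g hg
      rw [Finset.mem_filter] at hg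
      obtain ⟨hgP, hgnc⟩ := hg
      -- the class of `g` is the image of the orbit map
      have horb : (P.filter (fun g => ¬ ∀ i, g i = g 0)).filter (fun h => Rel.r h g)
          = Finset.image (fun k : ZMod p => rot k g) Finset.univ := by
        ext h
        simp only [Finset.mem_filter, Finset.mem_image, Finset.mem_univ, true_and]
        constructor
        · rintro ⟨-, k, hk⟩
          exact ⟨-k, by rw [← hk, rotrot, add_neg_cancel, rotzero]⟩
        · rintro ⟨k, rfl⟩
          refine ⟨⟨?_, ?_⟩, ⟨-k, by rw [rotrot, add_neg_cancel, rotzero]⟩⟩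
          · exact Fintype.mem_piFinset.2 fun l => Fintype.mem_piFinset.1 hgP _
          · intro hc
            apply hgnc
            intro j
            have hck : ∀ i, g (i + k) = g k := by
              intro i
              have h' := hc i
              simpa [rot, zero_add] using h'
            calc g j = g ((j - k) + k) := by congr 1; ring
            _ = g k := hck (j - k)
            _ = g ((-k) + k) := (hck (-k)).symm
            _ = g 0 := by congr 1; ring
      rw [horb, Finset.sum_image]
      · have hTc : ∀ k ∈ (Finset.univ : Finset (ZMod p)), T (rot k g) = T g :=
          fun k _ => hTrot g k
        rw [Finset.sum_congr rfl hTc, Finset.sum_const, Finset.card_univ, ZMod.card]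
        have hp0 : (p : R) = 0 := CharP.cast_eq_zero R p
        rw [nsmul_eq_mul, hp0, zero_mul]
      · intro a _ b _ hab
        by_contra hne
        have hd : a - b ≠ 0 := sub_ne_zero_of_ne hne
        apply hgnc
        apply hconst g (a - b) hd
        intro i
        have h' := congrFun hab (i - b)
        simp only [rot] at h'
        calc g (i + (a - b)) = g ((i - b) + a) := by congr 1; ring
        _ = g ((i - b) + b) := h'
        _ = g i := by congr 1; ring
    rw [hnonconst, add_zero]
    -- the constant part gives exactly the antidiagonal sum
    refine Finset.sum_bij' (fun g _ => g 0) (fun ij _ => fun _ => ij) ?_ ?_ ?_ ?_ ?_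
    · intro g hg
      rw [Finset.mem_filter] at hg
      exact Fintype.mem_piFinset.1 hg.1 0
    · intro ij hij
      rw [Finset.mem_filter]
      exact ⟨Fintype.mem_piFinset.2 fun _ => hij, fun _ => rfl⟩
    · intro g hg
      rw [Finset.mem_filter] at hg
      exact funext fun i => (hg.2 i).symm
    · intro ij _; rfl
    · intro g hg
      rw [Finset.mem_filter] at hg
      have hg0 : ∀ i, g i = g 0 := hg.2
      have h1 : (∏ l, u ((g l).1) : Submonoid.closure s) = (u ((g 0).1))^p := by
        rw [show (fun l => u ((g l).1)) = fun _ => u ((g 0).1) from funext fun l => by rw [hg0 l]]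
        rw [Finset.prod_const, Finset.card_univ, ZMod.card]
      have h2 : (∏ l, u ((g l).2) : Submonoid.closure s) = (u ((g 0).2))^p := by
        rw [show (fun l => u ((g l).2)) = fun _ => u ((g 0).2) from funext fun l => by rw [hg0 l]]
        rw [Finset.prod_const, Finset.card_univ, ZMod.card]
      simp only [hT, h1, h2, hpow]
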